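/- Let γ > 1 and s₀ ∈ ℝ. The set Σ = {(ρ, m, E) ∈ ℝ³ : ρ > 0, p > 0, q ≤ 0}, where p = (γ−1)(E − m²/(2ρ)) and q = (s₀ − log(p/ρ^γ))·ρ, is a convex subset of ℝ³. -/

import Mathlib

open Real Set

private lemma aux_div (a b ρ₁ ρ₂ m₁ m₂ : ℝ) (ha : 0 ≤ a) (hb : 0 ≤ b)
    (h1 : 0 < ρ₁) (h2 : 0 < ρ₂) (hρ : 0 < a * ρ₁ + b * ρ₂) :
    (a * m₁ + b * m₂) ^ 2 / (2 * (a * ρ₁ + b * ρ₂)) ≤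
      a * (m₁ ^ 2 / (2 * ρ₁)) + b * (m₂ ^ 2 / (2 * ρ₂)) := by
  set x := m₁ ^ 2 / (2 * ρ₁) with hxdef
  set y := m₂ ^ 2 / (2 * ρ₂) with hydef
  have hx : m₁ ^ 2 = 2 * ρ₁ * x := by rw [hxdef]; field_simp
  have hy : m₂ ^ 2 = 2 * ρ₂ * y := by rw [hydef]; field_simp
  rw [div_le_iff₀ (by positivity)]
  have hkey : 2 * (ρ₁ * ρ₂) * (a * b * (ρ₂ * x + ρ₁ * y - m₁ * m₂)) =
      a * b * (ρ₂ * m₁ - ρ₁ * m₂) ^ 2 := by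
    linear_combination (-(a * b * ρ₂ ^ 2)) * hx - a * b * ρ₁ ^ 2 * hy
  have hsq : 0 ≤ a * b * (ρ₂ * m₁ - ρ₁ * m₂) ^ 2 :=
    mul_nonneg (mul_nonneg ha hb) (sq_nonneg _)
  have hab2 : 0 ≤ a * b * (ρ₂ * x + ρ₁ * y - m₁ * m₂) := by
    nlinarith [mul_pos h1 h2]
  have hid : (a * x + b * y) * (2 * (a * ρ₁ + b * ρ₂)) - (a * m₁ + b * m₂) ^ 2 =
      2 * (a * b * (ρ₂ * x + ρ₁ * y - m₁ * m₂)) := by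
    linear_combination (-(a ^ 2)) * hx - b ^ 2 * hy
  linarith

theorem stmt_8 (γ s₀ : ℝ) (hγ : 1 < γ) :
    Convex ℝ {w : ℝ × ℝ × ℝ |
      0 < w.1 ∧
      0 < (γ - 1) * (w.2.2 - w.2.1 ^ 2 / (2 * w.1)) ∧
      (s₀ - Real.log
        ((γ - 1) * (w.2.2 - w.2.1 ^ 2 / (2 * w.1)) / w.1 ^ γ)) * w.1 ≤ 0} := by
  have hγ0 : (0:ℝ) < γ - 1 := by linarith
  have key : ∀ w : ℝ × ℝ × ℝ,
      (0 < w.1 ∧ 0 < (γ - 1) * (w.2.2 - w.2.1 ^ 2 / (2 * w.1)) ∧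
        (s₀ - Real.log ((γ - 1) * (w.2.2 - w.2.1 ^ 2 / (2 * w.1)) / w.1 ^ γ)) * w.1 ≤ 0)
      ↔ (0 < w.1 ∧
        Real.exp s₀ * w.1 ^ γ ≤ (γ - 1) * (w.2.2 - w.2.1 ^ 2 / (2 * w.1))) := by
    intro w
    constructor
    · rintro ⟨h1, h2, h3⟩
      refine ⟨h1, ?_⟩
      have hρ : (0:ℝ) < w.1 ^ γ := Real.rpow_pos_of_pos h1 γ
      have h4 : s₀ ≤ Real.log ((γ - 1) * (w.2.2 - w.2.1 ^ 2 / (2 * w.1)) / w.1 ^ γ) := by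
        nlinarith
      have h5 : Real.exp s₀ ≤ (γ - 1) * (w.2.2 - w.2.1 ^ 2 / (2 * w.1)) / w.1 ^ γ := by
        rw [← Real.le_log_iff_exp_le (div_pos h2 hρ)]; exact h4
      calc Real.exp s₀ * w.1 ^ γ
          ≤ ((γ - 1) * (w.2.2 - w.2.1 ^ 2 / (2 * w.1)) / w.1 ^ γ) * w.1 ^ γ :=
            mul_le_mul_of_nonneg_right h5 hρ.le
        _ = _ := div_mul_cancel₀ _ hρ.ne'
    · rintro ⟨h1, h2⟩
      have hρ : (0:ℝ) < w.1 ^ γ := Real.rpow_pos_of_pos h1 γ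
      have hexp : (0:ℝ) < Real.exp s₀ * w.1 ^ γ := by positivity
      have hp : 0 < (γ - 1) * (w.2.2 - w.2.1 ^ 2 / (2 * w.1)) := lt_of_lt_of_le hexp h2
      refine ⟨h1, hp, ?_⟩
      have h5 : Real.exp s₀ ≤ (γ - 1) * (w.2.2 - w.2.1 ^ 2 / (2 * w.1)) / w.1 ^ γ :=
        (le_div_iff₀ hρ).mpr h2
      have h4 : s₀ ≤ Real.log ((γ - 1) * (w.2.2 - w.2.1 ^ 2 / (2 * w.1)) / w.1 ^ γ) :=
        (Real.le_log_iff_exp_le (div_pos hp hρ)).mpr h5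
      nlinarith
  rw [convex_iff_forall_pos]
  rintro ⟨ρ₁, m₁, E₁⟩ hx ⟨ρ₂, m₂, E₂⟩ hy a b ha hb hab
  rw [Set.mem_setOf_eq] at hx hy ⊢
  rw [key] at hx hy
  obtain ⟨hρ1, hP1⟩ := hx
  obtain ⟨hρ2, hP2⟩ := hy
  simp only [Prod.smul_mk, Prod.mk_add_mk, smul_eq_mul]
  rw [key ⟨a * ρ₁ + b * ρ₂, a * m₁ + b * m₂, a * E₁ + b * E₂⟩]
  have hρ : 0 < a * ρ₁ + b * ρ₂ := by positivity
  refine ⟨hρ, ?_⟩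
  have hrpow : (a * ρ₁ + b * ρ₂) ^ γ ≤ a * ρ₁ ^ γ + b * ρ₂ ^ γ := by
    have := (convexOn_rpow hγ.le).2 (Set.mem_Ici.mpr hρ1.le) (Set.mem_Ici.mpr hρ2.le)
      ha.le hb.le hab
    simpa using this
  have hdiv := aux_div a b ρ₁ ρ₂ m₁ m₂ ha.le hb.le hρ1 hρ2 hρ
  have hE : Real.exp s₀ * (a * ρ₁ ^ γ + b * ρ₂ ^ γ) ≤
      a * ((γ - 1) * (E₁ - m₁ ^ 2 / (2 * ρ₁))) + b * ((γ - 1) * (E₂ - m₂ ^ 2 / (2 * ρ₂))) := by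
    nlinarith
  have hexp0 : (0:ℝ) ≤ Real.exp s₀ := (Real.exp_pos _).le
  nlinarith [mul_le_mul_of_nonneg_left hrpow hexp0]
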